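/- Let 𝔛 be a finite set, G an irreducible generator matrix on 𝔛, and ν the Markovian stick-breaking measure with generator G, viewed as a random element of the simplex Δ_𝔛 via x ↦ ν({x}). Then ν has full support on Δ_𝔛: for every η ∈ Δ_𝔛 and every ε > 0, P(|ν({x}) − η_x| < ε for all x ∈ 𝔛) > 0. -/

import Mathlib

open MeasureTheory ProbabilityTheory Matrix Filter

noncomputable section

/-- The Beta(1,θ) law on ℝ: density θ(1-x)^(θ-1) on [0,1]. -/
def beta1 (θ : ℝ) : Measure ℝ :=
  (volume.restrict (Set.Icc (0:ℝ) 1)).withDensity fun x => ENNReal.ofReal (θ * (1-x)^(θ-1))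

/-- Stick lengths of a residual allocation model: `stick X j` is `P_{j+1}`. -/
def stick {Ω : Type*} (X : ℕ → Ω → ℝ) (j : ℕ) (ω : Ω) : ℝ :=
  X j ω * ∏ i ∈ Finset.range j, (1 - X i ω)

/-- The random measure ν(A) = Σ_j P_j 1{T_j ∈ A}. -/
def nuSB {Ω 𝔛 : Type*} (X : ℕ → Ω → ℝ) (T : ℕ → Ω → 𝔛) (A : Set 𝔛) (ω : Ω) : ℝ :=
  ∑' j, stick X j ω * A.indicator (fun _ => (1:ℝ)) (T j ω)

/-- Conditional expectation given an event: E[Z | E] = E[Z 1_E]/P(E). -/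
def cexp {Ω : Type*} [MeasurableSpace Ω] (Pr : Measure Ω) (Z : Ω → ℝ) (E : Set Ω) : ℝ :=
  (∫ ω in E, Z ω ∂Pr) / (Pr E).toReal

/-- Generator matrix: nonnegative off-diagonal entries, rows summing to zero. -/
def IsGenerator {𝔛 : Type*} [Fintype 𝔛] [DecidableEq 𝔛] (G : Matrix 𝔛 𝔛 ℝ) : Prop :=
  (∀ x y, x ≠ y → 0 ≤ G x y) ∧ ∀ x, G x x = -∑ y ∈ Finset.univ.erase x, G x y

/-- Irreducibility of a square matrix: some power has positive (x,y) entry for all x,y. -/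
def IrreducibleMat {𝔛 : Type*} [Fintype 𝔛] [DecidableEq 𝔛] (Q : Matrix 𝔛 𝔛 ℝ) : Prop :=
  ∀ x y, ∃ m, 1 ≤ m ∧ 0 < (Q ^ m) x y

/-- Row-stochastic matrix. -/
def IsStochastic {𝔛 : Type*} [Fintype 𝔛] (Q : Matrix 𝔛 𝔛 ℝ) : Prop :=
  (∀ x y, 0 ≤ Q x y) ∧ ∀ x, ∑ y, Q x y = 1

-- D(A): diagonal 0-1 matrix of a set.
open scoped Classical in
def DMat {𝔛 : Type*} [Fintype 𝔛] [DecidableEq 𝔛] (A : Set 𝔛) : Matrix 𝔛 𝔛 ℝ :=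
  Matrix.diagonal fun x => if x ∈ A then 1 else 0

/-- Reverse-ordered matrix product M_k ⋯ M_1 of M indexed by `Fin k` (0-based). -/
def revProd {𝔛 : Type*} [Fintype 𝔛] [DecidableEq 𝔛] {k : ℕ} (M : Fin k → Matrix 𝔛 𝔛 ℝ) :
    Matrix 𝔛 𝔛 ℝ :=
  ((List.ofFn M).reverse).prod

-- The set S(k⃗) of sequences in `α^N` with exactly `kv a` entries equal to `a`.
open scoped Classical in
def SSeq {α : Type*} [Fintype α] [DecidableEq α] (kv : α → ℕ) (N : ℕ) :
    Finset (Fin N → α) :=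
  Finset.univ.filter fun σ => ∀ a, (Finset.univ.filter fun i => σ i = a).card = kv a

end


namespace MSBaux
open MeasureTheory Finset

lemma tele (v : ℕ → ℝ) (M : ℕ) :
    ∑ j ∈ range M, v j * ∏ i ∈ range j, (1 - v i)
      = 1 - ∏ i ∈ range M, (1 - v i) := by
  induction M with
  | zero => simp
  | succ M ih =>
      rw [Finset.sum_range_succ, Finset.prod_range_succ, ih]
      ring

lemma pow_entry_nonneg {𝔛 : Type*} [Fintype 𝔛] [DecidableEq 𝔛] {Q : Matrix 𝔛 𝔛 ℝ}
    (hQ : ∀ a b, 0 ≤ Q a b) (m : ℕ) : ∀ a b, 0 ≤ (Q ^ m) a b := by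
  induction m with
  | zero => intro a b; rw [pow_zero, Matrix.one_apply]; split <;> norm_num
  | succ m ih =>
      intro a b
      rw [pow_succ, Matrix.mul_apply]
      exact Finset.sum_nonneg fun z _ => mul_nonneg (ih a z) (hQ z b)

lemma path_exists {𝔛 : Type*} [Fintype 𝔛] [DecidableEq 𝔛] {Q : Matrix 𝔛 𝔛 ℝ}
    (hQ : ∀ a b, 0 ≤ Q a b) :
    ∀ (m : ℕ) (x y : 𝔛), 0 < (Q ^ m) x y →
      ∃ p : ℕ → 𝔛, p 0 = x ∧ p m = y ∧ ∀ i < m, 0 < Q (p i) (p (i+1)) := by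
  intro m
  induction m with
  | zero =>
      intro x y h
      rw [pow_zero, Matrix.one_apply] at h
      by_cases hxy : x = y
      · exact ⟨fun _ => x, rfl, hxy, by omega⟩
      · simp [hxy] at h
  | succ m ih =>
      intro x y h
      rw [pow_succ, Matrix.mul_apply] at h
      have : ∃ z : 𝔛, 0 < (Q ^ m) x z * Q z y := by
        by_contra hc
        push_neg at hc
        exact absurd (Finset.sum_nonpos fun z _ => hc z) (not_le.mpr h)
      obtain ⟨z, hz⟩ := this
      have h1 : 0 < (Q ^ m) x z ∧ 0 < Q z y := by
        rcases mul_pos_iff.mp hz with h' | h'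
        · exact h'
        · exact absurd h'.1 (not_lt.mpr (pow_entry_nonneg hQ m x z))
      obtain ⟨p, hp0, hpm, hptr⟩ := ih x z h1.1
      refine ⟨fun i => if i = m + 1 then y else p i, by simp [hp0], by simp, ?_⟩
      intro i hi
      rcases Nat.lt_or_ge i m with him | him
      · have : i ≠ m + 1 := by omega
        have : i + 1 ≠ m + 1 := by omega
        simpa [‹i ≠ m+1›, this, Nat.ne_of_lt him] using hptr i him
      · have hieq : i = m := by omega
        subst hieq
        simpa [Nat.succ_ne_self, hpm] using h1.2

lemma traj_exists {𝔛 : Type*} [Fintype 𝔛] [DecidableEq 𝔛] {Q : Matrix 𝔛 𝔛 ℝ}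
    (hQ : ∀ a b, 0 ≤ Q a b) (hirr : ∀ x y, ∃ m, 1 ≤ m ∧ 0 < (Q ^ m) x y) :
    ∀ (l : List 𝔛) (x : 𝔛), ∃ (N : ℕ) (p : ℕ → 𝔛), p 0 = x ∧
      (∀ i < N, 0 < Q (p i) (p (i+1))) ∧ ∀ y ∈ l, ∃ j ≤ N, p j = y := by
  intro l
  induction l with
  | nil => intro x; exact ⟨0, fun _ => x, rfl, by omega, by simp⟩
  | cons y l ihl =>
      intro x
      obtain ⟨m, -, hm⟩ := hirr x y
      obtain ⟨p, hp0, hpm, hptr⟩ := path_exists hQ m x y hm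
      obtain ⟨N', p', hp'0, hp'tr, hp'vis⟩ := ihl y
      refine ⟨m + N', fun i => if i < m then p i else p' (i - m), ?_, ?_, ?_⟩
      · by_cases h0 : 0 < m
        · simp [h0, hp0]
        · have hm0 : m = 0 := by omega
          subst hm0
          simp only [Nat.lt_irrefl, if_neg, Nat.sub_zero, not_lt_zero', if_false]
          rw [hp'0, ← hpm, hp0]
      · intro i hi
        rcases Nat.lt_or_ge (i+1) m with h1 | h1
        · have : i < m := by omega
          simpa [this, h1] using hptr i (by omega)
        · rcases Nat.lt_or_ge i m with h2 | h2
          · have him : i + 1 = m := by omega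
            have : ¬ (i + 1 < m) := by omega
            simp only [h2, if_pos, this, if_neg, if_false]
            rw [him]
            simp only [Nat.sub_self]
            rw [hp'0, ← hpm, ← him]
            exact hptr i (by omega)
          · have : ¬ i < m := by omega
            have h3 : ¬ i + 1 < m := by omega
            have h4 : i + 1 - m = (i - m) + 1 := by omega
            simp only [this, if_neg, h3, h4]
            exact hp'tr (i - m) (by omega)
      · intro z hz
        rcases List.mem_cons.mp hz with hz | hz
        · subst hz
          refine ⟨m, by omega, ?_⟩
          by_cases h0 : m < m
          · omega
          · simp [h0, Nat.sub_self, hp'0]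
        · obtain ⟨j, hj, hjz⟩ := hp'vis z hz
          refine ⟨m + j, by omega, ?_⟩
          have : ¬ m + j < m := by omega
          simp [this, Nat.add_sub_cancel_left, hjz]

lemma beta1_compl (θ : ℝ) : beta1 θ (Set.Icc (0:ℝ) 1)ᶜ = 0 := by
  rw [beta1, withDensity_apply _ (measurableSet_Icc.compl),
    Measure.restrict_restrict measurableSet_Icc.compl, Set.compl_inter_self]
  simp

lemma beta1_Ioo_pos {θ a b : ℝ} (hθ : 0 < θ) (h0 : 0 ≤ a) (hab : a < b) (hb1 : b ≤ 1) :
    0 < beta1 θ (Set.Ioo a b) := by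
  set m := (a + b) / 2 with hm
  have ham : a < m := by rw [hm]; linarith
  have hmb : m < b := by rw [hm]; linarith
  have hm1 : m < 1 := lt_of_lt_of_le hmb hb1
  set c := 1 - m with hc
  have hcpos : 0 < c := by rw [hc]; linarith
  set d := min (c ^ (θ - 1)) 1 with hd
  have hdpos : 0 < d := lt_min (Real.rpow_pos_of_pos hcpos _) one_pos
  have hdens : ∀ x ∈ Set.Ioo a m, ENNReal.ofReal (θ * d) ≤ ENNReal.ofReal (θ * (1-x)^(θ-1)) := by
    intro x hx
    apply ENNReal.ofReal_le_ofReal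
    apply mul_le_mul_of_nonneg_left _ hθ.le
    have h1x : c ≤ 1 - x := by rw [hc]; linarith [hx.2]
    have h1x' : 0 < 1 - x := lt_of_lt_of_le hcpos h1x
    rcases le_or_gt 1 θ with hθ1 | hθ1
    · exact le_trans (min_le_left _ _) (Real.rpow_le_rpow hcpos.le h1x (by linarith))
    · exact le_trans (min_le_right _ _)
        (Real.one_le_rpow_of_pos_of_le_one_of_nonpos h1x' (by linarith [hx.1, h0]) (by linarith))
  have hsub : Set.Ioo a m ⊆ Set.Ioo a b := Set.Ioo_subset_Ioo le_rfl hmb.le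
  have key : ENNReal.ofReal (θ * d) * volume (Set.Ioo a m) ≤ beta1 θ (Set.Ioo a b) := by
    rw [beta1, withDensity_apply _ measurableSet_Ioo,
      Measure.restrict_restrict measurableSet_Ioo,
      Set.inter_eq_self_of_subset_left (Set.Ioo_subset_Icc_self.trans
        (Set.Icc_subset_Icc h0 hb1))]
    calc ENNReal.ofReal (θ * d) * volume (Set.Ioo a m)
        = ∫⁻ _x in Set.Ioo a m, ENNReal.ofReal (θ * d) := by
          rw [setLIntegral_const, mul_comm]
      _ ≤ ∫⁻ x in Set.Ioo a m, ENNReal.ofReal (θ * (1-x)^(θ-1)) := by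
          refine setLIntegral_mono' measurableSet_Ioo hdens
      _ ≤ ∫⁻ x in Set.Ioo a b, ENNReal.ofReal (θ * (1-x)^(θ-1)) :=
          lintegral_mono_set hsub
  refine lt_of_lt_of_le ?_ key
  apply ENNReal.mul_pos
  · exact (ENNReal.ofReal_pos.mpr (by positivity)).ne'
  · rw [Real.volume_Ioo]
    exact (ENNReal.ofReal_pos.mpr (by linarith)).ne'

lemma v0_exists {𝔛 : Type*} [Fintype 𝔛] [DecidableEq 𝔛]
    (η : 𝔛 → ℝ) (hη0 : ∀ x, 0 ≤ η x) (hη1 : ∑ x, η x = 1)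
    (N' : ℕ) (t : ℕ → 𝔛) (jfun : 𝔛 → ℕ)
    (hjt : ∀ x, t (jfun x) = x) (hjN : ∀ x, jfun x < N') :
    ∃ v0 : ℕ → ℝ, (∀ j, 0 ≤ v0 j ∧ v0 j ≤ 1) ∧
      (∀ x, (∑ j ∈ range N', if t j = x then v0 j * ∏ i ∈ range j, (1 - v0 i) else 0) = η x) ∧
      ∏ i ∈ range N', (1 - v0 i) = 0 := by
  classical
  set r : ℕ → ℝ := fun j => 1 - ∑ x ∈ univ.filter (fun x => jfun x < j), η x with hrdef
  set v0 : ℕ → ℝ := fun j =>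
    if jfun (t j) = j then (if r j = 0 then 0 else η (t j) / r j) else 0 with hv0def
  have hrj : ∀ j, r j = 1 - ∑ x ∈ univ.filter (fun x => jfun x < j), η x := fun _ => rfl
  have hv0j : ∀ j, v0 j = if jfun (t j) = j then (if r j = 0 then 0 else η (t j) / r j) else 0 :=
    fun _ => rfl
  clear_value r v0
  have hr_eq : ∀ j, r j = ∑ x ∈ univ.filter (fun x => ¬ jfun x < j), η x := by
    intro j
    have h := Finset.sum_filter_add_sum_filter_not univ (fun x => jfun x < j) η
    rw [hη1] at h
    rw [hrj]
    linarith
  have hr_nonneg : ∀ j, 0 ≤ r j := fun j => by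
    rw [hr_eq]; exact Finset.sum_nonneg fun x _ => hη0 x
  have hηle : ∀ j, jfun (t j) = j → η (t j) ≤ r j := by
    intro j hj
    rw [hr_eq]
    refine Finset.single_le_sum (fun x _ => hη0 x) ?_
    simp [hj]
  have hηzero : ∀ j, jfun (t j) = j → r j = 0 → η (t j) = 0 := by
    intro j h1 h2
    have := hηle j h1
    have := hη0 (t j)
    linarith [h2 ▸ this]
  have hv0mem : ∀ j, 0 ≤ v0 j ∧ v0 j ≤ 1 := by
    intro j
    rw [hv0j]
    split_ifs with h1 h2
    · norm_num
    · have hrpos : 0 < r j := lt_of_le_of_ne (hr_nonneg j) (Ne.symm h2)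
      constructor
      · exact div_nonneg (hη0 _) hrpos.le
      · rw [div_le_one hrpos]; exact hηle j h1
    · norm_num
  have hfilter_split : ∀ j, (univ.filter (fun x => jfun x < j + 1)) =
      (univ.filter (fun x => jfun x < j)) ∪ (univ.filter (fun x => jfun x = j)) := by
    intro j; ext x; simp only [mem_filter, mem_union, mem_univ, true_and]; omega
  have hfilter_eq : ∀ j, (univ.filter (fun x => jfun x = j)) =
      if jfun (t j) = j then ({t j} : Finset 𝔛) else ∅ := by
    intro j
    ext x
    simp only [mem_filter, mem_univ, true_and]
    constructor
    · intro hx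
      have hxt : x = t j := by rw [← hx, hjt]
      subst hxt
      rw [if_pos hx]
      exact Finset.mem_singleton_self _
    · intro hx
      split_ifs at hx with h
      · rw [Finset.mem_singleton] at hx; rw [hx]; exact h
      · simp at hx
  have hrstep : ∀ j, r (j + 1) = r j - (if jfun (t j) = j then η (t j) else 0) := by
    intro j
    rw [hrj (j+1), hrj j, hfilter_split j, Finset.sum_union, hfilter_eq j]
    · split_ifs with h
      · rw [Finset.sum_singleton]; ring
      · rw [Finset.sum_empty]; ring
    · rw [Finset.disjoint_filter]
      intro x _ hx
      omega
  have hprod : ∀ j, ∏ i ∈ range j, (1 - v0 i) = r j := by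
    intro j
    induction j with
    | zero => simp [hrj 0]
    | succ j ih =>
        rw [Finset.prod_range_succ, ih, hrstep j, hv0j j]
        split_ifs with h1 h2
        · rw [h2, hηzero j h1 h2]; ring
        · field_simp
        · ring
  have hstick : ∀ j, v0 j * ∏ i ∈ range j, (1 - v0 i)
      = if jfun (t j) = j then η (t j) else 0 := by
    intro j
    rw [hprod, hv0j j]
    split_ifs with h1 h2
    · rw [h2, hηzero j h1 h2]; ring
    · field_simp
    · ring
  refine ⟨v0, hv0mem, ?_, ?_⟩
  · intro x
    have hcongr : ∀ j ∈ range N', (if t j = x then v0 j * ∏ i ∈ range j, (1 - v0 i) else 0)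
        = if j = jfun x then η x else 0 := by
      intro j _
      rw [hstick]
      by_cases hj : j = jfun x
      · subst hj
        simp [hjt x]
      · by_cases htj : t j = x
        · have hne : ¬ jfun x = j := by
            intro hc; exact hj hc.symm
          rw [htj]
          simp [hne, hj]
        · simp [htj, hj]
    rw [Finset.sum_congr rfl hcongr, Finset.sum_ite_eq' (range N') (jfun x) (fun _ => η x)]
    simp [hjN x]
  · rw [hprod, hr_eq]
    apply Finset.sum_eq_zero
    intro x hx
    rw [Finset.mem_filter] at hx
    exact absurd (hjN x) hx.2

lemma tele' (v : ℕ → ℝ) (M : ℕ) :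
    ∑ j ∈ range M, v j * ∏ i ∈ range j, (1 - v i)
      = 1 - ∏ i ∈ range M, (1 - v i) := by
  induction M with
  | zero => simp
  | succ M ih => rw [Finset.sum_range_succ, Finset.prod_range_succ, ih]; ring

lemma pointwise_bound (u : ℕ → ℝ) (hu : ∀ i, 0 ≤ u i ∧ u i ≤ 1) (g : ℕ → ℝ)
    (hg0 : ∀ j, 0 ≤ g j) (hgle : ∀ j, g j ≤ u j * ∏ i ∈ range j, (1 - u i)) (N' : ℕ) :
    Summable g ∧
      |(∑' j, g j) - ∑ j ∈ range N', g j| ≤ ∏ i ∈ range N', (1 - u i) := by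
  have hfac : ∀ i, 0 ≤ 1 - u i ∧ 1 - u i ≤ 1 := fun i => ⟨by linarith [(hu i).2], by linarith [(hu i).1]⟩
  have hP0 : ∀ M, (0:ℝ) ≤ ∏ i ∈ range M, (1 - u i) :=
    fun M => Finset.prod_nonneg fun i _ => (hfac i).1
  have hpart : ∀ M, ∑ j ∈ range M, g j ≤ 1 := by
    intro M
    calc ∑ j ∈ range M, g j ≤ ∑ j ∈ range M, u j * ∏ i ∈ range j, (1 - u i) :=
          Finset.sum_le_sum fun j _ => hgle j
      _ = 1 - ∏ i ∈ range M, (1 - u i) := tele' u M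
      _ ≤ 1 := by linarith [hP0 M]
  have hsum : Summable g := summable_of_sum_range_le hg0 hpart
  refine ⟨hsum, ?_⟩
  have hsplit := hsum.sum_add_tsum_nat_add N'
  have htail0 : 0 ≤ ∑' k, g (k + N') := tsum_nonneg fun k => hg0 _
  have htailP : (∑' k, g (k + N')) ≤ ∏ i ∈ range N', (1 - u i) := by
    apply Real.tsum_le_of_sum_range_le (fun k => hg0 _)
    intro M
    calc ∑ k ∈ range M, g (k + N')
        ≤ ∑ k ∈ range M, u (k + N') * ∏ i ∈ range (k + N'), (1 - u i) :=
          Finset.sum_le_sum fun k _ => hgle _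
      _ = (∏ i ∈ range N', (1 - u i)) *
            ∑ k ∈ range M, (u (N' + k) * ∏ i ∈ range k, (1 - u (N' + i))) := by
          rw [Finset.mul_sum]
          refine Finset.sum_congr rfl fun k _ => ?_
          rw [add_comm k N', Finset.prod_range_add]
          ring
      _ = (∏ i ∈ range N', (1 - u i)) *
            (1 - ∏ i ∈ range M, (1 - u (N' + i))) := by
          rw [tele' (fun k => u (N' + k)) M]
      _ ≤ ∏ i ∈ range N', (1 - u i) := by
          have h1 : (0:ℝ) ≤ ∏ i ∈ range M, (1 - u (N' + i)) :=
            Finset.prod_nonneg fun i _ => (hfac _).1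
          nlinarith [hP0 N']
  rw [← hsplit]
  rw [abs_le]
  constructor <;> [linarith; linarith]

end MSBaux

/-- Proposition 3.7: the MSB measure has full support on the simplex. -/
theorem stmt7
    {𝔛 Ω : Type*} [Fintype 𝔛] [DecidableEq 𝔛] [MeasurableSpace 𝔛] [DiscreteMeasurableSpace 𝔛]
    [MeasurableSpace Ω] (Pr : Measure Ω) [IsProbabilityMeasure Pr]
    (G : Matrix 𝔛 𝔛 ℝ) (μ : 𝔛 → ℝ) (θ : ℝ)
    (hθpos : 0 < θ) (hθG : ∀ x, |G x x| ≤ θ)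
    (hgen : IsGenerator G) (hirr : IrreducibleMat (1 + θ⁻¹ • G))
    (hμ0 : ∀ x, 0 ≤ μ x) (hμ1 : ∑ x, μ x = 1) (hμG : ∀ y, ∑ x, μ x * G x y = 0)
    -- the GEM(θ) ingredients: i.i.d. Beta(1,θ) variables X
    (X : ℕ → Ω → ℝ) (hXmeas : ∀ j, Measurable (X j))
    (hXiid : iIndepFun X Pr)
    (hXlaw : ∀ j, Measure.map (X j) Pr = beta1 θ)
    -- the stationary Markov chain T with kernel Q = I + G/θ and initial law μ
    (T : ℕ → Ω → 𝔛) (hTmeas : ∀ j, Measurable (T j))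
    (hTlaw : ∀ (m : ℕ) (t : Fin (m+1) → 𝔛),
      Pr {ω | ∀ i : Fin (m+1), T i ω = t i} =
        ENNReal.ofReal (μ (t 0) * ∏ i : Fin m, (1 + θ⁻¹ • G) (t i.castSucc) (t i.succ)))
    -- independence of the GEM sticks and the chain
    (hindep : IndepFun (fun ω j => X j ω) (fun ω j => T j ω) Pr)
    (η : 𝔛 → ℝ) (hη0 : ∀ x, 0 ≤ η x) (hη1 : ∑ x, η x = 1) (ε : ℝ) (hε : 0 < ε) :
    0 < Pr {ω | ∀ x, |nuSB X T {x} ω - η x| < ε} := by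
  classical
  have hne𝔛 : Nonempty 𝔛 := by
    by_contra h
    rw [not_nonempty_iff] at h
    rw [Finset.univ_eq_empty, Finset.sum_empty] at hμ1
    norm_num at hμ1
  set Q : Matrix 𝔛 𝔛 ℝ := 1 + θ⁻¹ • G with hQdef
  have hQapp : ∀ a b, Q a b = (if a = b then (1:ℝ) else 0) + θ⁻¹ * G a b := by
    intro a b
    rw [hQdef, Matrix.add_apply, Matrix.smul_apply, Matrix.one_apply, smul_eq_mul]
  have hQ0 : ∀ a b, 0 ≤ Q a b := by
    intro a b
    rw [hQapp]
    by_cases hab : a = b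
    · subst hab
      have h1 : -θ ≤ G a a := (abs_le.mp (hθG a)).1
      have h2 := mul_le_mul_of_nonneg_left h1 (inv_nonneg.mpr hθpos.le)
      have h3 : θ⁻¹ * θ = 1 := inv_mul_cancel₀ hθpos.ne'
      have h4 : (if a = a then (1:ℝ) else 0) = 1 := by simp
      rw [h4]
      nlinarith
    · simp only [if_neg hab, zero_add]
      exact mul_nonneg (inv_nonneg.mpr hθpos.le) (hgen.1 a b hab)
  have hstat : ∀ y, ∑ x, μ x * Q x y = μ y := by
    intro y
    have h1 : ∑ x, μ x * Q x y
        = ∑ x, ((if x = y then μ x else 0) + θ⁻¹ * (μ x * G x y)) := by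
      refine Finset.sum_congr rfl fun x _ => ?_
      rw [hQapp]
      split_ifs <;> ring
    rw [h1, Finset.sum_add_distrib, ← Finset.mul_sum, hμG y,
      Finset.sum_ite_eq' Finset.univ y (fun x => μ x)]
    simp
  have hstatm : ∀ m y, ∑ x, μ x * (Q ^ m) x y = μ y := by
    intro m
    induction m with
    | zero =>
        intro y
        simp only [pow_zero, Matrix.one_apply, mul_ite, mul_one, mul_zero]
        rw [Finset.sum_ite_eq' Finset.univ y (fun x => μ x)]
        simp
    | succ m ih =>
        intro y
        calc ∑ x, μ x * (Q ^ (m+1)) x y = ∑ x, ∑ z, μ x * (Q ^ m) x z * Q z y := by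
              refine Finset.sum_congr rfl fun x _ => ?_
              rw [pow_succ, Matrix.mul_apply, Finset.mul_sum]
              exact Finset.sum_congr rfl fun z _ => (mul_assoc _ _ _).symm
          _ = ∑ z, (∑ x, μ x * (Q ^ m) x z) * Q z y := by
              rw [Finset.sum_comm]
              exact Finset.sum_congr rfl fun z _ => (Finset.sum_mul _ _ _).symm
          _ = μ y := by
              simp_rw [ih]
              exact hstat y
  have hμpos : ∀ y, 0 < μ y := by
    have hx0 : ∃ x0, 0 < μ x0 := by
      by_contra h
      push_neg at h
      have hz : ∀ x ∈ Finset.univ, μ x = 0 := fun x _ => le_antisymm (h x) (hμ0 x)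
      rw [Finset.sum_congr rfl hz, Finset.sum_const_zero] at hμ1
      norm_num at hμ1
    obtain ⟨x0, hx0⟩ := hx0
    intro y
    obtain ⟨m, -, hm⟩ := hirr x0 y
    have hterm := Finset.single_le_sum (f := fun x => μ x * (Q ^ m) x y)
      (fun x _ => mul_nonneg (hμ0 x) (MSBaux.pow_entry_nonneg hQ0 m x y)) (Finset.mem_univ x0)
    rw [hstatm m y] at hterm
    exact lt_of_lt_of_le (mul_pos hx0 hm) hterm
  -- a trajectory visiting every state
  obtain ⟨z0⟩ := hne𝔛
  obtain ⟨N, p, hp0, hptr, hpvis⟩ := MSBaux.traj_exists hQ0 hirr Finset.univ.toList z0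
  have hvis : ∀ x : 𝔛, ∃ j, j ≤ N ∧ p j = x :=
    fun x => hpvis x (Finset.mem_toList.mpr (Finset.mem_univ x))
  set jfun : 𝔛 → ℕ := fun x => (hvis x).choose with hjdef
  have hjfun : ∀ x, jfun x ≤ N ∧ p (jfun x) = x := fun x => (hvis x).choose_spec
  obtain ⟨v0, hv0mem, hv0F, hv0R⟩ := MSBaux.v0_exists η hη0 hη1 (N+1) p jfun
    (fun x => (hjfun x).2) (fun x => by have := (hjfun x).1; omega)
  -- continuity setup
  set ρ : (Fin (N+1) → ℝ) → (ℕ → ℝ) := fun w j => if h : j < N+1 then w ⟨j, h⟩ else 0 with hρdef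
  set F : 𝔛 → (ℕ → ℝ) → ℝ := fun x v =>
    ∑ j ∈ Finset.range (N+1), if p j = x then v j * ∏ i ∈ Finset.range j, (1 - v i) else 0
    with hFdef
  set Rf : (ℕ → ℝ) → ℝ := fun v => ∏ i ∈ Finset.range (N+1), (1 - v i) with hRdef
  set Ψ : (Fin (N+1) → ℝ) → ℝ := fun w => (∑ x, |F x (ρ w) - η x|) + |Rf (ρ w)| with hΨdef
  have hρc : ∀ j, Continuous fun w : Fin (N+1) → ℝ => ρ w j := by
    intro j
    simp only [hρdef]
    by_cases h : j < N+1
    · simp only [dif_pos h]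
      exact continuous_apply _
    · simp only [dif_neg h]
      exact continuous_const
  have hΨc : Continuous Ψ := by
    rw [hΨdef]
    apply Continuous.add
    · apply continuous_finset_sum
      intro x _
      apply Continuous.abs
      apply Continuous.sub _ continuous_const
      simp only [hFdef]
      apply continuous_finset_sum
      intro j _
      by_cases hpj : p j = x
      · simp only [if_pos hpj]
        exact (hρc j).mul (continuous_finset_prod _ fun i _ => continuous_const.sub (hρc i))
      · simp only [if_neg hpj]
        exact continuous_const
    · apply Continuous.abs
      simp only [hRdef]
      exact continuous_finset_prod _ fun i _ => continuous_const.sub (hρc i)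
  have hρv0 : ∀ j, j < N+1 → ρ (fun i : Fin (N+1) => v0 i) j = v0 j := by
    intro j hj
    simp only [hρdef, dif_pos hj]
  have hFdep : ∀ x (a b : ℕ → ℝ), (∀ j, j < N+1 → a j = b j) → F x a = F x b := by
    intro x a b hab
    simp only [hFdef]
    refine Finset.sum_congr rfl fun j hj => ?_
    rw [Finset.mem_range] at hj
    have h1 : a j = b j := hab j hj
    have h2 : ∏ i ∈ Finset.range j, (1 - a i) = ∏ i ∈ Finset.range j, (1 - b i) :=
      Finset.prod_congr rfl fun i hi =>
        by rw [hab i (lt_trans (Finset.mem_range.mp hi) hj)]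
    rw [h1, h2]
  have hRdep : ∀ (a b : ℕ → ℝ), (∀ j, j < N+1 → a j = b j) → Rf a = Rf b := by
    intro a b hab
    simp only [hRdef]
    exact Finset.prod_congr rfl fun i hi => by rw [hab i (Finset.mem_range.mp hi)]
  have hΨ0 : Ψ (fun i : Fin (N+1) => v0 i) = 0 := by
    rw [hΨdef]
    have h1 : ∀ x, F x (ρ fun i : Fin (N+1) => v0 i) = η x := by
      intro x
      rw [hFdep x _ v0 hρv0]
      simp only [hFdef]
      exact hv0F x
    have h2 : Rf (ρ fun i : Fin (N+1) => v0 i) = 0 := by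
      rw [hRdep _ v0 hρv0]
      simp only [hRdef]
      exact hv0R
    simp [h1, h2]
  have hev : ∀ᶠ w in nhds (fun i : Fin (N+1) => v0 i), Ψ w < ε := by
    have ht := hΨc.continuousAt (x := fun i : Fin (N+1) => v0 i)
    rw [ContinuousAt, hΨ0] at ht
    exact ht.eventually_lt_const hε
  obtain ⟨δ, hδpos, hδ⟩ := Metric.eventually_nhds_iff.mp hev
  -- the intervals
  set aI : ℕ → ℝ := fun j => max (v0 j - δ/2) 0 with haIdef
  set bI : ℕ → ℝ := fun j => min (v0 j + δ/2) 1 with hbIdef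
  have hab : ∀ j, aI j < bI j := by
    intro j
    have h0 := (hv0mem j).1
    have h1 := (hv0mem j).2
    apply max_lt <;> apply lt_min <;> linarith
  have haI0 : ∀ j, 0 ≤ aI j := fun j => le_max_right _ _
  have hbI1 : ∀ j, bI j ≤ 1 := fun j => min_le_right _ _
  -- the events
  set EX : Set Ω := ⋂ j ∈ Finset.range (N+1), X j ⁻¹' (Set.Ioo (aI j) (bI j)) with hEXdef
  set tv : Fin (N+1) → 𝔛 := fun i => p i.val with htvdef
  have hEXprob : Pr EX = ∏ j ∈ Finset.range (N+1), Pr (X j ⁻¹' Set.Ioo (aI j) (bI j)) :=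
    hXiid.meas_biInter (S := Finset.range (N+1))
      (fun j _ => ⟨Set.Ioo (aI j) (bI j), measurableSet_Ioo, rfl⟩)
  have hEXpos : 0 < Pr EX := by
    rw [hEXprob]
    rw [CanonicallyOrderedAdd.prod_pos]
    intro j _
    rw [← Measure.map_apply (hXmeas j) measurableSet_Ioo, hXlaw j]
    exact MSBaux.beta1_Ioo_pos hθpos (haI0 j) (hab j) (hbI1 j)
  have hETprob := hTlaw N tv
  have hETpos : 0 < Pr {ω | ∀ i : Fin (N+1), T i ω = tv i} := by
    rw [hETprob]
    apply ENNReal.ofReal_pos.mpr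
    apply mul_pos (hμpos _)
    apply Finset.prod_pos
    intro i _
    have h1 : tv i.castSucc = p i.val := rfl
    have h2 : tv i.succ = p (i.val + 1) := rfl
    rw [h1, h2]
    exact hptr i.val i.isLt
  -- independence of the two events
  set Aset : Set (ℕ → ℝ) :=
    ⋂ j ∈ Finset.range (N+1), (fun v : ℕ → ℝ => v j) ⁻¹' (Set.Ioo (aI j) (bI j)) with hAdef
  set Bset : Set (ℕ → 𝔛) := ⋂ i : Fin (N+1), (fun g : ℕ → 𝔛 => g i.val) ⁻¹' {tv i} with hBdef
  have hAmeas : MeasurableSet Aset :=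
    MeasurableSet.biInter (Finset.range (N+1)).countable_toSet
      (fun j _ => (measurable_pi_apply j) measurableSet_Ioo)
  have hBmeas : MeasurableSet Bset :=
    MeasurableSet.iInter fun i => (measurable_pi_apply _) (MeasurableSet.singleton _)
  have hEXeq : EX = (fun ω j => X j ω) ⁻¹' Aset := by
    rw [hEXdef, hAdef]
    ext ω
    simp [Set.mem_iInter]
  have hETeq : {ω | ∀ i : Fin (N+1), T i ω = tv i} = (fun ω j => T j ω) ⁻¹' Bset := by
    rw [hBdef]
    ext ω
    simp [Set.mem_iInter]
  have hmul : Pr (EX ∩ {ω | ∀ i : Fin (N+1), T i ω = tv i}) =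
      Pr EX * Pr {ω | ∀ i : Fin (N+1), T i ω = tv i} := by
    rw [hEXeq, hETeq]
    exact hindep.measure_inter_preimage_eq_mul Aset Bset hAmeas hBmeas
  -- the a.s. event that all sticks are in [0,1]
  set AS : Set Ω := ⋂ j, X j ⁻¹' (Set.Icc (0:ℝ) 1) with hASdef
  have hASmeas : MeasurableSet AS :=
    MeasurableSet.iInter fun j => (hXmeas j) measurableSet_Icc
  have hAScompl : Pr ASᶜ = 0 := by
    rw [hASdef, Set.compl_iInter]
    apply measure_iUnion_null
    intro j
    rw [← Set.preimage_compl]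
    have h2 : Pr (X j ⁻¹' (Set.Icc (0:ℝ) 1)ᶜ) = beta1 θ (Set.Icc (0:ℝ) 1)ᶜ := by
      rw [← Measure.map_apply (hXmeas j) measurableSet_Icc.compl, hXlaw j]
    rw [h2]
    exact MSBaux.beta1_compl θ
  -- positivity of the combined event
  have hEpos : 0 < Pr ((EX ∩ {ω | ∀ i : Fin (N+1), T i ω = tv i}) ∩ AS) := by
    have h1 : 0 < Pr (EX ∩ {ω | ∀ i : Fin (N+1), T i ω = tv i}) := by
      rw [hmul]
      exact ENNReal.mul_pos hEXpos.ne' hETpos.ne'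
    have h3 : Pr ((EX ∩ {ω | ∀ i : Fin (N+1), T i ω = tv i}) \ AS) = 0 :=
      measure_mono_null (fun ω hω => hω.2) hAScompl
    have h4 := measure_inter_add_diff (μ := Pr)
      (EX ∩ {ω | ∀ i : Fin (N+1), T i ω = tv i}) hASmeas
    rw [h3, add_zero] at h4
    rw [h4]
    exact h1
  refine lt_of_lt_of_le hEpos (measure_mono ?_)
  rintro ω ⟨⟨hωX, hωT⟩, hωAS⟩
  rw [hEXdef] at hωX
  rw [hASdef] at hωAS
  have hXmem : ∀ j, j < N+1 → X j ω ∈ Set.Ioo (aI j) (bI j) := by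
    intro j hj
    exact Set.mem_iInter₂.mp hωX j (Finset.mem_range.mpr hj)
  have hTmem : ∀ i : Fin (N+1), T i ω = p i.val := fun i => hωT i
  have hXIcc : ∀ j, (0:ℝ) ≤ X j ω ∧ X j ω ≤ 1 := by
    intro j
    have hh := Set.mem_iInter.mp hωAS j
    exact ⟨hh.1, hh.2⟩
  simp only [Set.mem_setOf_eq]
  intro x
  set u : ℕ → ℝ := fun j => X j ω with hudef
  have hu : ∀ i, 0 ≤ u i ∧ u i ≤ 1 := fun i => hXIcc i
  set w : Fin (N+1) → ℝ := fun i => u i.val with hwdef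
  have hwd : dist w (fun i : Fin (N+1) => v0 i) < δ := by
    rw [dist_pi_lt_iff hδpos]
    intro i
    rw [Real.dist_eq]
    have h := hXmem i.val i.isLt
    have hb2 : bI i.val ≤ v0 i.val + δ/2 := by
      simp only [hbIdef]
      exact min_le_left _ _
    have ha2 : v0 i.val - δ/2 ≤ aI i.val := by
      simp only [haIdef]
      exact le_max_left _ _
    have h1 : u i.val < v0 i.val + δ/2 := lt_of_lt_of_le h.2 hb2
    have h2 : v0 i.val - δ/2 < u i.val := lt_of_le_of_lt ha2 h.1
    rw [abs_lt]
    constructor <;> [linarith; linarith]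
  have hΨw : Ψ w < ε := hδ hwd
  have hstick_eq : ∀ j, stick X j ω = u j * ∏ i ∈ Finset.range j, (1 - u i) := fun j => rfl
  have hind01 : ∀ j, 0 ≤ Set.indicator ({x} : Set 𝔛) (fun _ => (1:ℝ)) (T j ω) ∧
      Set.indicator ({x} : Set 𝔛) (fun _ => (1:ℝ)) (T j ω) ≤ 1 := by
    intro j
    rw [Set.indicator_apply]
    split_ifs <;> norm_num
  have hstick0 : ∀ j, 0 ≤ stick X j ω := by
    intro j
    rw [hstick_eq]
    exact mul_nonneg (hu j).1 (Finset.prod_nonneg fun i _ => by linarith [(hu i).2])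
  have hg0 : ∀ j, 0 ≤ stick X j ω * Set.indicator {x} (fun _ => (1:ℝ)) (T j ω) :=
    fun j => mul_nonneg (hstick0 j) (hind01 j).1
  have hgle : ∀ j, stick X j ω * Set.indicator {x} (fun _ => (1:ℝ)) (T j ω)
      ≤ u j * ∏ i ∈ Finset.range j, (1 - u i) := by
    intro j
    rw [← hstick_eq j]
    calc stick X j ω * Set.indicator {x} (fun _ => (1:ℝ)) (T j ω)
        ≤ stick X j ω * 1 := mul_le_mul_of_nonneg_left (hind01 j).2 (hstick0 j)
      _ = stick X j ω := mul_one _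
  obtain ⟨hsum, htail⟩ := MSBaux.pointwise_bound u hu
    (fun j => stick X j ω * Set.indicator {x} (fun _ => (1:ℝ)) (T j ω)) hg0 hgle (N+1)
  have hpart : ∑ j ∈ Finset.range (N+1), stick X j ω * Set.indicator {x} (fun _ => (1:ℝ)) (T j ω)
      = F x u := by
    simp only [hFdef]
    refine Finset.sum_congr rfl fun j hj => ?_
    rw [Finset.mem_range] at hj
    have hT : T j ω = p j := hTmem ⟨j, hj⟩
    rw [hstick_eq j, hT, Set.indicator_apply]
    by_cases hpx : p j = x
    · simp [hpx]
    · simp [hpx]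
  have hFu : F x u = F x (ρ w) := hFdep x u (ρ w) (by
    intro j hj
    simp only [hρdef, hwdef, dif_pos hj])
  have hRu : Rf u = Rf (ρ w) := hRdep u (ρ w) (by
    intro j hj
    simp only [hρdef, hwdef, dif_pos hj])
  have hnu : nuSB X T {x} ω
      = ∑' j, stick X j ω * Set.indicator {x} (fun _ => (1:ℝ)) (T j ω) := rfl
  have hterm : |F x (ρ w) - η x| ≤ ∑ x', |F x' (ρ w) - η x'| :=
    Finset.single_le_sum (f := fun x' => |F x' (ρ w) - η x'|)
      (fun x' _ => abs_nonneg _) (Finset.mem_univ x)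
  have htail' : |(∑' j, stick X j ω * Set.indicator {x} (fun _ => (1:ℝ)) (T j ω))
      - ∑ j ∈ Finset.range (N+1), stick X j ω * Set.indicator {x} (fun _ => (1:ℝ)) (T j ω)|
      ≤ Rf u := by
    simp only [hRdef]
    exact htail
  calc |nuSB X T {x} ω - η x|
      ≤ |nuSB X T {x} ω - ∑ j ∈ Finset.range (N+1),
            stick X j ω * Set.indicator {x} (fun _ => (1:ℝ)) (T j ω)|
        + |(∑ j ∈ Finset.range (N+1),
            stick X j ω * Set.indicator {x} (fun _ => (1:ℝ)) (T j ω)) - η x| :=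
        abs_sub_le _ _ _
    _ ≤ Rf u + |F x u - η x| := by
        apply add_le_add
        · rw [hnu]
          exact htail'
        · rw [hpart]
    _ ≤ |Rf (ρ w)| + ∑ x', |F x' (ρ w) - η x'| := by
        apply add_le_add
        · rw [hRu]
          exact le_abs_self _
        · rw [hFu]
          exact hterm
    _ = Ψ w := by
        simp only [hΨdef]
        ring
    _ < ε := hΨw
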